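/- Let α ∈ (0,1) and let θ : ℝ² → [0,∞) be integrable with ∫ y'^⊥ θ(y') dy' = 0 and moment of inertia I = ∫|y'|² θ(y') dy' (moments about the origin). Then for any x' with |x'| = R > 0, | ∫_{|y'| ≤ R/2} (x'·y'^⊥)/(|x'| |x'-y'|^{2+α}) θ(y') dy' | ≤ C I / R^{3+α} for a constant C depending only on α. -/

import Mathlib

open Real Set MeasureTheory
set_option maxHeartbeats 1000000
open Real Set MeasureTheory

noncomputable def perp (v : EuclideanSpace ℝ (Fin 2)) : EuclideanSpace ℝ (Fin 2) :=
  (WithLp.equiv 2 (Fin 2 → ℝ)).symm ![v 1, -v 0]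

lemma norm_perp (y : EuclideanSpace ℝ (Fin 2)) : ‖perp y‖ = ‖y‖ := by
  simp [perp, EuclideanSpace.norm_eq, Fin.sum_univ_two]
  ring_nf

lemma continuous_perp : Continuous perp := by
  apply Continuous.comp (PiLp.continuous_toLp 2 (fun _ : Fin 2 => ℝ))
  refine continuous_pi ?_
  intro i
  fin_cases i
  · simpa using (EuclideanSpace.proj (1 : Fin 2) : EuclideanSpace ℝ (Fin 2) →L[ℝ] ℝ).continuous
  · exact ((EuclideanSpace.proj (0 : Fin 2) : EuclideanSpace ℝ (Fin 2) →L[ℝ] ℝ).continuous).neg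
open Real Set MeasureTheory

lemma rpow_mvt (β R a : ℝ) (hβ : 1 ≤ β) (hR : 0 < R) (ha : a ∈ Icc (R/2) (3*R/2)) :
    |a ^ β - R ^ β| ≤ β * (3*R/2) ^ (β-1) * |a - R| := by
  have hRmem : R ∈ Icc (R/2) (3*R/2) := by constructor <;> linarith
  have hder : ∀ t ∈ Icc (R/2) (3*R/2), HasDerivWithinAt (fun s : ℝ => s ^ β)
      (β * t ^ (β-1)) (Icc (R/2) (3*R/2)) t := by
    intro t ht
    have h := Real.hasDerivAt_rpow_const (x := t) (p := β) (Or.inr hβ)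
    simpa [mul_comm] using h.hasDerivWithinAt
  have hbound : ∀ t ∈ Icc (R/2) (3*R/2), ‖β * t ^ (β-1)‖ ≤ β * (3*R/2) ^ (β-1) := by
    intro t ht
    have ht0 : 0 ≤ t := by have := ht.1; linarith
    have : t ^ (β-1) ≤ (3*R/2) ^ (β-1) :=
      Real.rpow_le_rpow ht0 ht.2 (by linarith)
    have h1 : 0 ≤ t ^ (β-1) := Real.rpow_nonneg ht0 _
    rw [Real.norm_eq_abs, abs_mul, abs_of_nonneg (by linarith : (0:ℝ) ≤ β), abs_of_nonneg h1]
    exact mul_le_mul_of_nonneg_left this (by linarith)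
  have := (convex_Icc (R/2) (3*R/2)).norm_image_sub_le_of_norm_hasDerivWithin_le hder hbound hRmem ha
  simpa [Real.norm_eq_abs] using this

lemma algebra_e1 (p t r aβ Rβ : ℝ) (hr : r ≠ 0) (ha : aβ ≠ 0) (hRβ : Rβ ≠ 0) :
    p / (r * aβ) * t - p * t / (r * Rβ) = p * t * ((Rβ - aβ) / (r * aβ * Rβ)) := by
  field_simp

lemma algebra_e2 (r n t K c d : ℝ) (hr : r ≠ 0) (hc : c ≠ 0) (hd : d ≠ 0) :
    (r * n) * t * ((K * n) / (r * c * d)) = (n ^ 2 * t) * (K / (c * d)) := by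
  field_simp

/-- Combined estimate of `H₁'` and `H₁''` in Lemma 2.2: if `θ ≥ 0` has vanishing first
perpendicular moment and moment of inertia `I` about the origin, then for `|x'| = R > 0`,
`|∫_{|y'|≤R/2} (x'·y'^⊥)/(|x'| |x'-y'|^{2+α}) θ(y') dy'| ≤ C I / R^{3+α}` with `C = C(α)`. -/
theorem stmt17 (α : ℝ) (hα : α ∈ Ioo (0:ℝ) 1) :
    ∃ C > 0, ∀ θ : EuclideanSpace ℝ (Fin 2) → ℝ, Integrable θ → (∀ y, 0 ≤ θ y) →
      (∫ y, θ y • perp y) = 0 →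
      ∀ I : ℝ, I = (∫ y, ‖y‖ ^ 2 * θ y) → Integrable (fun y => ‖y‖ ^ 2 * θ y) →
      ∀ (x : EuclideanSpace ℝ (Fin 2)) (R : ℝ), 0 < R → ‖x‖ = R →
        abs (∫ y in {y : EuclideanSpace ℝ (Fin 2) | ‖y‖ ≤ R / 2},
            (inner ℝ x (perp y) : ℝ) / (‖x‖ * ‖x - y‖ ^ (2 + α)) * θ y) ≤
          C * I / R ^ (3 + α) := by
  obtain ⟨hα0, hα1⟩ := hα
  refine ⟨102, by norm_num, ?_⟩
  intro θ hθ hθ0 hmom I hI hI2 x R hR hxR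
  set β : ℝ := 2 + α with hβ
  have hβ1 : (1:ℝ) ≤ β := by simp only [hβ]; linarith
  have hβ3 : β ≤ 3 := by simp only [hβ]; linarith
  have hI0 : 0 ≤ I := by
    rw [hI]; exact integral_nonneg fun y => mul_nonneg (by positivity) (hθ0 y)
  set S : Set (EuclideanSpace ℝ (Fin 2)) := {y | ‖y‖ ≤ R / 2} with hSdef
  have hS : MeasurableSet S := (isClosed_le continuous_norm continuous_const).measurableSet
  have hc : (0:ℝ) < R ^ (3 + α) := rpow_pos_of_pos hR _
  -- the linear function g
  set g : EuclideanSpace ℝ (Fin 2) → ℝ := fun y => (inner ℝ x (perp y) : ℝ) * θ y with hgdef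
  have hgcont : Continuous fun y => (inner ℝ x (perp y) : ℝ) :=
    continuous_const.inner continuous_perp
  have hgb : ∀ y, |g y| ≤ R * θ y + R * (‖y‖ ^ 2 * θ y) := by
    intro y
    have h1 : |(inner ℝ x (perp y) : ℝ)| ≤ R * ‖y‖ := by
      calc |(inner ℝ x (perp y) : ℝ)| ≤ ‖x‖ * ‖perp y‖ := abs_real_inner_le_norm x (perp y)
        _ = R * ‖y‖ := by rw [hxR, norm_perp]
    have h2 : ‖y‖ ≤ 1 + ‖y‖ ^ 2 := by nlinarith [sq_nonneg (‖y‖ - 1), norm_nonneg y]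
    calc |g y| = |(inner ℝ x (perp y) : ℝ)| * θ y := by
          rw [hgdef]; simp [abs_mul, abs_of_nonneg (hθ0 y)]
      _ ≤ R * ‖y‖ * θ y := mul_le_mul_of_nonneg_right h1 (hθ0 y)
      _ ≤ R * (1 + ‖y‖ ^ 2) * θ y := by
          apply mul_le_mul_of_nonneg_right _ (hθ0 y)
          exact mul_le_mul_of_nonneg_left h2 hR.le
      _ = R * θ y + R * (‖y‖ ^ 2 * θ y) := by ring
  have hbint0 : Integrable (fun y : EuclideanSpace ℝ (Fin 2) =>
      θ y + ‖y‖ ^ 2 * θ y) := hθ.add hI2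
  have hbint : Integrable (fun y : EuclideanSpace ℝ (Fin 2) =>
      R * θ y + R * (‖y‖ ^ 2 * θ y)) := (hθ.const_mul R).add (hI2.const_mul R)
  have hgint : Integrable g := by
    refine hbint.mono' (hgcont.aestronglyMeasurable.mul hθ.1) (ae_of_all _ fun y => ?_)
    simpa [Real.norm_eq_abs] using hgb y
  -- vanishing total integral of g
  have hgzero : (∫ y, g y) = 0 := by
    have hhint : Integrable fun y => θ y • perp y := by
      refine hbint0.mono' (hθ.1.smul continuous_perp.aestronglyMeasurable) (ae_of_all _ fun y => ?_)
      have : ‖θ y • perp y‖ = θ y * ‖y‖ := by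
        rw [norm_smul, norm_perp, Real.norm_eq_abs, abs_of_nonneg (hθ0 y)]
      rw [this]
      have h2 : ‖y‖ ≤ 1 + ‖y‖ ^ 2 := by nlinarith [sq_nonneg (‖y‖ - 1), norm_nonneg y]
      nlinarith [mul_le_mul_of_nonneg_left h2 (hθ0 y)]
    have := integral_inner (𝕜 := ℝ) hhint x
    rw [hmom] at this
    simp only [inner_zero_right] at this
    rw [← this]
    congr 1; ext y
    rw [hgdef]; simp [real_inner_smul_right]; ring
  -- complement bound
  have hsplit : (∫ y in S, g y) + (∫ y in Sᶜ, g y) = 0 := by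
    rw [integral_add_compl hS hgint, hgzero]
  have hcomp : |∫ y in S, g y| ≤ 2 * I := by
    have hSg : (∫ y in S, g y) = -(∫ y in Sᶜ, g y) := by linarith
    rw [hSg, abs_neg]
    have step1 : |∫ y in Sᶜ, g y| ≤ ∫ y in Sᶜ, |g y| := by
      simpa [Real.norm_eq_abs] using norm_integral_le_integral_norm (μ := volume.restrict Sᶜ) g
    have step2 : (∫ y in Sᶜ, |g y|) ≤ ∫ y in Sᶜ, 2 * (‖y‖ ^ 2 * θ y) := by
      refine setIntegral_mono_on hgint.abs.integrableOn ((hI2.const_mul 2).integrableOn)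
        hS.compl fun y hy => ?_
      have hy' : R / 2 < ‖y‖ := by
        simpa [hSdef] using hy
      have h1 : |(inner ℝ x (perp y) : ℝ)| ≤ R * ‖y‖ := by
        calc |(inner ℝ x (perp y) : ℝ)| ≤ ‖x‖ * ‖perp y‖ := abs_real_inner_le_norm x (perp y)
          _ = R * ‖y‖ := by rw [hxR, norm_perp]
      have : |g y| ≤ R * ‖y‖ * θ y := by
        rw [hgdef]; simp only [abs_mul, abs_of_nonneg (hθ0 y)]
        exact mul_le_mul_of_nonneg_right h1 (hθ0 y)
      have hR2 : R ≤ 2 * ‖y‖ := by linarith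
      nlinarith [hθ0 y, norm_nonneg y, mul_nonneg (mul_nonneg (norm_nonneg y) (norm_nonneg y)) (hθ0 y)]
    have step3 : (∫ y in Sᶜ, 2 * (‖y‖ ^ 2 * θ y)) ≤ ∫ y, 2 * (‖y‖ ^ 2 * θ y) := by
      refine setIntegral_le_integral (hI2.const_mul 2) (ae_of_all _ fun y => ?_)
      have := mul_nonneg (sq_nonneg ‖y‖) (hθ0 y)
      positivity
    have step4 : (∫ y, 2 * (‖y‖ ^ 2 * θ y)) = 2 * I := by
      rw [integral_const_mul, ← hI]
    linarith
  -- the main integrand f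
  set f : EuclideanSpace ℝ (Fin 2) → ℝ :=
    fun y => (inner ℝ x (perp y) : ℝ) / (R * ‖x - y‖ ^ β) * θ y with hfdef
  -- pointwise facts on S
  have hdist : ∀ y ∈ S, ‖x - y‖ ∈ Icc (R/2) (3*R/2) := by
    intro y hy
    have hy' : ‖y‖ ≤ R / 2 := hy
    constructor
    · have := norm_sub_norm_le x y
      rw [hxR] at this; linarith
    · have := norm_sub_le x y
      rw [hxR] at this; linarith
  -- integrability of f on S
  have hfmeas : AEStronglyMeasurable f (volume.restrict S) := by
    have h1 : Measurable fun y : EuclideanSpace ℝ (Fin 2) => ‖x - y‖ ^ β :=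
      ((Real.continuous_rpow_const (by linarith : (0:ℝ) ≤ β)).comp
        (continuous_const.sub continuous_id).norm).measurable
    exact (((hgcont.measurable.div ((measurable_const.mul h1))).aestronglyMeasurable).mul
      hθ.1).restrict
  have hfS : IntegrableOn f S := by
    have hRb : (0:ℝ) < (R/2) ^ β := rpow_pos_of_pos (by linarith) _
    refine Integrable.mono' ((hθ.restrict).const_mul ((R * (R/2)) / (R * (R/2) ^ β))) hfmeas ?_
    rw [ae_restrict_iff' hS]
    refine ae_of_all _ fun y hy => ?_
    obtain ⟨hd1, hd2⟩ := hdist y hy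
    have hy' : ‖y‖ ≤ R / 2 := hy
    have ha : (R/2) ^ β ≤ ‖x - y‖ ^ β := rpow_le_rpow (by linarith) hd1 (by linarith)
    have ha0 : (0:ℝ) < ‖x - y‖ ^ β := lt_of_lt_of_le hRb ha
    have h1 : |(inner ℝ x (perp y) : ℝ)| ≤ R * (R/2) := by
      calc |(inner ℝ x (perp y) : ℝ)| ≤ ‖x‖ * ‖perp y‖ := abs_real_inner_le_norm x (perp y)
        _ = R * ‖y‖ := by rw [hxR, norm_perp]
        _ ≤ R * (R/2) := by nlinarith
    rw [Real.norm_eq_abs, hfdef]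
    simp only [abs_mul, abs_div, abs_of_nonneg (hθ0 y)]
    rw [abs_of_pos hR, abs_of_pos ha0]
    refine mul_le_mul_of_nonneg_right ?_ (hθ0 y)
    refine div_le_div₀ (by positivity) h1 (by positivity) ?_
    exact mul_le_mul_of_nonneg_left ha hR.le
  -- key pointwise estimate on S
  have key : ∀ y ∈ S, |f y - g y / R ^ (3+α)| ≤ 100 / R ^ (3+α) * (‖y‖ ^ 2 * θ y) := by
    intro y hy
    obtain ⟨hd1, hd2⟩ := hdist y hy
    have hy' : ‖y‖ ≤ R / 2 := hy
    set a := ‖x - y‖ with hadef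
    have ha0 : (0:ℝ) < a := by linarith
    have haβ : (0:ℝ) < a ^ β := rpow_pos_of_pos ha0 _
    have hRβ : (0:ℝ) < R ^ β := rpow_pos_of_pos hR _
    have hR2β : (0:ℝ) < (R/2) ^ β := rpow_pos_of_pos (by linarith) _
    have hRc : R ^ (3+α) = R * R ^ β := by
      rw [hβ, show (3:ℝ)+α = 1 + (2+α) by ring, rpow_add hR, rpow_one]
    have e1 : f y - g y / R ^ (3+α) =
        (inner ℝ x (perp y) : ℝ) * θ y * ((R ^ β - a ^ β) / (R * a ^ β * R ^ β)) := by
      rw [hfdef, hgdef, hRc]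
      exact algebra_e1 _ _ _ _ _ hR.ne' haβ.ne' hRβ.ne'
    have hp : |(inner ℝ x (perp y) : ℝ)| ≤ R * ‖y‖ := by
      calc |(inner ℝ x (perp y) : ℝ)| ≤ ‖x‖ * ‖perp y‖ := abs_real_inner_le_norm x (perp y)
        _ = R * ‖y‖ := by rw [hxR, norm_perp]
    have hsub : |a - R| ≤ ‖y‖ := by
      have h := abs_norm_sub_norm_le (x - y) x
      have h2 : x - y - x = -y := by abel
      rw [h2, norm_neg, hxR] at h
      exact h
    have hmvt : |R ^ β - a ^ β| ≤ β * (3*R/2)^(β-1) * ‖y‖ := by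
      rw [abs_sub_comm]
      calc |a^β - R^β| ≤ β * (3*R/2)^(β-1) * |a - R| := rpow_mvt β R a hβ1 hR ⟨hd1, hd2⟩
        _ ≤ β * (3*R/2)^(β-1) * ‖y‖ := by
            refine mul_le_mul_of_nonneg_left hsub ?_
            have : (0:ℝ) < (3*R/2)^(β-1) := rpow_pos_of_pos (by linarith) _
            nlinarith
    have ha_lb : (R/2) ^ β ≤ a ^ β := rpow_le_rpow (by linarith) hd1 (by linarith)
    have hconst : β * (3*R/2)^(β-1) * R ^ (3+α) ≤ 100 * ((R/2) ^ β * R ^ β) := by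
      have h32 : (3*R/2:ℝ)^(β-1) = (3/2:ℝ)^(β-1) * R^(β-1) := by
        rw [show (3*R/2:ℝ) = (3/2)*R by ring, mul_rpow (by norm_num) hR.le]
      have h12 : (R/2:ℝ)^β = (1/2:ℝ)^β * R^β := by
        rw [show (R/2:ℝ) = (1/2)*R by ring, mul_rpow (by norm_num) hR.le]
      have hRe : R^(β-1) * R^(3+α) = R^β * R^β := by
        rw [← rpow_add hR, ← rpow_add hR]
        congr 1
        rw [hβ]; ring
      have he2 : ((3:ℝ)/2)^(2:ℝ) = 9/4 := by
        rw [show ((2:ℝ)) = ((2:ℕ):ℝ) from by norm_num, rpow_natCast]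
        norm_num
      have he3 : ((1:ℝ)/2)^(3:ℝ) = 1/8 := by
        rw [show ((3:ℝ)) = ((3:ℕ):ℝ) from by norm_num, rpow_natCast]
        norm_num
      have hn1 : (3/2:ℝ)^(β-1) ≤ 9/4 := by
        rw [← he2]
        exact rpow_le_rpow_of_exponent_le (by norm_num) (by rw [hβ]; linarith)
      have hn2 : (1/8:ℝ) ≤ (1/2:ℝ)^β := by
        rw [← he3]
        exact rpow_le_rpow_of_exponent_ge (by norm_num) (by norm_num) hβ3
      have hn0 : (0:ℝ) < (3/2:ℝ)^(β-1) := rpow_pos_of_pos (by norm_num) _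
      rw [h32, h12, mul_assoc β, mul_assoc, hRe]
      have hP : (0:ℝ) < R^β * R^β := by positivity
      calc β * ((3/2:ℝ)^(β-1) * (R^β * R^β)) ≤ 3 * ((9/4) * (R^β * R^β)) := by
            refine mul_le_mul hβ3 ?_ (by positivity) (by norm_num)
            exact mul_le_mul_of_nonneg_right hn1 hP.le
        _ ≤ 100 * ((1/8) * (R^β * R^β)) := by nlinarith
        _ ≤ 100 * ((1/2:ℝ)^β * (R^β * R^β)) := by
            refine mul_le_mul_of_nonneg_left ?_ (by norm_num)
            exact mul_le_mul_of_nonneg_right hn2 hP.le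
        _ = 100 * ((1/2:ℝ)^β * R^β * R^β) := by ring
    -- combine
    rw [e1, abs_mul, abs_mul, abs_div, abs_of_nonneg (hθ0 y),
      abs_of_pos (by positivity : (0:ℝ) < R * a^β * R^β)]
    have c1 : |(inner ℝ x (perp y) : ℝ)| * θ y * (|R^β - a^β| / (R*a^β*R^β)) ≤
        (R * ‖y‖) * θ y * ((β * (3*R/2)^(β-1) * ‖y‖) / (R*(R/2)^β*R^β)) := by
      refine mul_le_mul (mul_le_mul_of_nonneg_right hp (hθ0 y)) ?_ (by positivity) ?_
      · refine div_le_div₀ (by positivity) hmvt (by positivity) ?_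
        refine mul_le_mul_of_nonneg_right ?_ hRβ.le
        exact mul_le_mul_of_nonneg_left ha_lb hR.le
      · exact mul_nonneg (mul_nonneg hR.le (norm_nonneg y)) (hθ0 y)
    refine c1.trans ?_
    have e2 : (R * ‖y‖) * θ y * ((β * (3*R/2)^(β-1) * ‖y‖) / (R*(R/2)^β*R^β)) =
        (‖y‖^2 * θ y) * (β * (3*R/2)^(β-1) / ((R/2)^β*R^β)) := by
      exact algebra_e2 _ _ _ _ _ _ hR.ne' hR2β.ne' hRβ.ne'
    rw [e2]
    have c2 : β * (3*R/2)^(β-1) / ((R/2)^β*R^β) ≤ 100 / R^(3+α) := by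
      rw [div_le_div_iff₀ (by positivity) hc]
      calc β * (3*R/2)^(β-1) * R^(3+α) ≤ 100 * ((R/2)^β * R^β) := hconst
        _ = 100 * ((R/2)^β * R^β) := rfl
    calc (‖y‖^2 * θ y) * (β * (3*R/2)^(β-1) / ((R/2)^β*R^β)) ≤
        (‖y‖^2 * θ y) * (100 / R^(3+α)) := by
          refine mul_le_mul_of_nonneg_left c2 ?_
          exact mul_nonneg (sq_nonneg _) (hθ0 y)
      _ = 100 / R^(3+α) * (‖y‖^2 * θ y) := by ring
  -- assemble
  have hsubint : IntegrableOn (fun y => f y - g y / R ^ (3+α)) S :=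
    hfS.sub ((hgint.div_const _).integrableOn)
  have hmain : |∫ y in S, (f y - g y / R^(3+α))| ≤ 100 / R^(3+α) * I := by
    have s1 : |∫ y in S, (f y - g y / R^(3+α))| ≤ ∫ y in S, |f y - g y / R^(3+α)| := by
      simpa [Real.norm_eq_abs] using
        norm_integral_le_integral_norm (μ := volume.restrict S) (fun y => f y - g y / R^(3+α))
    have s2 : (∫ y in S, |f y - g y / R^(3+α)|) ≤ ∫ y in S, 100/R^(3+α) * (‖y‖^2*θ y) :=
      setIntegral_mono_on hsubint.abs ((hI2.const_mul _).integrableOn) hS key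
    have s3 : (∫ y in S, 100/R^(3+α) * (‖y‖^2*θ y)) = 100/R^(3+α) * ∫ y in S, ‖y‖^2*θ y :=
      integral_const_mul _ _
    have s4 : (∫ y in S, ‖y‖^2*θ y) ≤ I := by
      rw [hI]
      exact setIntegral_le_integral hI2 (ae_of_all _ fun y => mul_nonneg (sq_nonneg _) (hθ0 y))
    have s5 : 100/R^(3+α) * (∫ y in S, ‖y‖^2*θ y) ≤ 100/R^(3+α) * I :=
      mul_le_mul_of_nonneg_left s4 (by positivity)
    linarith
  have hsplitS : (∫ y in S, f y) =
      (∫ y in S, (f y - g y / R^(3+α))) + (∫ y in S, g y) / R^(3+α) := by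
    rw [integral_sub hfS ((hgint.integrableOn).div_const _), integral_div]
    ring
  have hgoal : (∫ y in {y : EuclideanSpace ℝ (Fin 2) | ‖y‖ ≤ R / 2},
      (inner ℝ x (perp y) : ℝ) / (‖x‖ * ‖x - y‖ ^ (2 + α)) * θ y) = ∫ y in S, f y := by
    rw [hfdef]
    simp only [hxR, hβ]
    rfl
  rw [hgoal, hsplitS]
  have habs : |(∫ y in S, g y) / R^(3+α)| = |∫ y in S, g y| / R^(3+α) := by
    rw [abs_div, abs_of_pos hc]
  calc |(∫ y in S, (f y - g y / R^(3+α))) + (∫ y in S, g y) / R^(3+α)| ≤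
      |∫ y in S, (f y - g y / R^(3+α))| + |(∫ y in S, g y) / R^(3+α)| := abs_add_le _ _
    _ ≤ 100/R^(3+α) * I + 2*I/R^(3+α) := by
        rw [habs]
        have : |∫ y in S, g y| / R^(3+α) ≤ 2*I / R^(3+α) :=
          div_le_div_of_nonneg_right hcomp hc.le
        linarith
    _ = 102 * I / R^(3+α) := by field_simp; ring
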